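/- arXiv:2102.09524 — 2 statements merged into one kernel-verified Lean document; each statement's English description precedes it below -/
import Mathlib

section
/- Let G be a group, A a set with at least two elements, and H ≤ G a subgroup of infinite index. Then the set {x ∈ A^G : Stab_G(x) = H} is infinite, where Stab_G(x) is the stabiliser of x under the shift action. -/
/-- The shift action of a group `G` on the full shift `A^G`: `(g • x) h = x (g⁻¹ * h)`. -/
instance shiftMulAction (G A : Type*) [Group G] : MulAction G (G → A) where
  smul g x := fun h => x (g⁻¹ * h)
  one_smul x := by funext h; show x (1⁻¹ * h) = x h; simp
  mul_smul g₁ g₂ x := by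
    funext h
    show x ((g₁ * g₂)⁻¹ * h) = x (g₂⁻¹ * (g₁⁻¹ * h))
    simp [mul_assoc]

theorem stmt2 (G A : Type*) [Group G] [Nontrivial A] (H : Subgroup G)
    (hinf : ¬ H.FiniteIndex) :
    {x : G → A | MulAction.stabilizer G x = H}.Infinite := by
  classical
  obtain ⟨a, b, hab⟩ := exists_pair_ne A
  have hidx : H.index = 0 := by
    by_contra h; exact hinf ⟨h⟩
  have hinfQ : Infinite (G ⧸ H) := by
    rcases Nat.card_eq_zero.mp hidx with h | h
    · exact (h.false (QuotientGroup.mk (1 : G))).elim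
    · exact h
  set f : G → (G → A) := fun t h => if h * t ∈ H then a else b with hf
  -- f t has stabilizer exactly H
  have hstab : ∀ t : G, MulAction.stabilizer G (f t) = H := by
    intro t
    ext g
    rw [MulAction.mem_stabilizer_iff]
    constructor
    · intro hg
      have := congrFun hg (g * t⁻¹)
      have h1 : (g • f t) (g * t⁻¹) = f t t⁻¹ := by
        show f t (g⁻¹ * (g * t⁻¹)) = f t t⁻¹
        congr 1; group
      rw [h1] at this
      simp only [hf, inv_mul_cancel] at this
      rw [if_pos H.one_mem] at this
      by_contra hgH
      rw [mul_assoc, inv_mul_cancel, mul_one, if_neg hgH] at this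
      exact hab this
    · intro hg
      funext h
      show f t (g⁻¹ * h) = f t h
      simp only [hf]
      congr 1
      rw [mul_assoc]
      exact propext (mul_mem_cancel_left (H.inv_mem hg))
  -- f descends to an injective map on G ⧸ H
  have hwd : ∀ t t' : G, (t : G ⧸ H) = t' → f t = f t' := by
    intro t t' htt
    have hk : t⁻¹ * t' ∈ H := QuotientGroup.eq.mp htt
    funext h
    simp only [hf]
    congr 1
    have : h * t' = h * t * (t⁻¹ * t') := by group
    rw [this]
    exact propext (mul_mem_cancel_right hk).symm
  let F : G ⧸ H → (G → A) := fun q => f q.out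
  have hFinj : Function.Injective F := by
    intro q q' hqq
    have := congrFun hqq q.out⁻¹
    simp only [F, hf, inv_mul_cancel, if_pos H.one_mem] at this
    have hmem : q.out⁻¹ * q'.out ∈ H := by
      by_contra hc
      rw [if_neg hc] at this
      exact hab this
    have : (q.out : G ⧸ H) = q'.out := QuotientGroup.eq.mpr hmem
    rwa [QuotientGroup.out_eq', QuotientGroup.out_eq'] at this
  exact Set.infinite_of_injective_forall_mem hFinj (fun q => hstab q.out)
end

section
/- Let G be a finitely generated group, A a finite set of size q, and H a finite-index subgroup of G such that the interval [H, G] in the subgroup lattice is a chain H = H_0 < H_1 < … < H_k = G with k ≥ 1. Then the number of configurations in A^G with least period H equals q^{[G:H]} − q^{[G:H_1]}. -/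
/-- Configurations fixed by `K` correspond to functions on the right coset space. -/
def fixedEquivAux {G A : Type*} [Group G] (K : Subgroup G) :
    {x : G → A // K ≤ MulAction.stabilizer G x} ≃
      (Quotient (QuotientGroup.rightRel K) → A) where
  toFun x := Quotient.lift x.1 (by
    intro a b hab
    have hab' : b * a⁻¹ ∈ K := QuotientGroup.rightRel_apply.mp hab
    have h1 : (b * a⁻¹) • x.1 = x.1 := x.2 hab'
    have h2 := congrFun h1 b
    show x.1 a = x.1 b
    calc x.1 a = x.1 ((b * a⁻¹)⁻¹ * b) := by group
    _ = x.1 b := h2)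
  invFun y := ⟨fun g => y ⟦g⟧, by
    intro g hg
    show (g • fun g' => y ⟦g'⟧) = fun g' => y ⟦g'⟧
    funext h
    show y ⟦g⁻¹ * h⟧ = y ⟦h⟧
    refine congrArg y (Quotient.sound (QuotientGroup.rightRel_apply.mpr ?_))
    group
    simpa using hg⟩
  left_inv x := by ext g; rfl
  right_inv y := by funext z; induction z using Quotient.inductionOn; rfl

lemma card_fixed {G A : Type*} [Group G] [Finite A] (K : Subgroup G) [K.FiniteIndex] :
    Nat.card {x : G → A // K ≤ MulAction.stabilizer G x} = (Nat.card A) ^ K.index := by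
  have e2 : Quotient (QuotientGroup.rightRel K) ≃ (G ⧸ K) :=
    QuotientGroup.quotientRightRelEquivQuotientLeftRel K
  have : Finite (G ⧸ K) := K.finite_quotient_of_finiteIndex
  have : Finite (Quotient (QuotientGroup.rightRel K)) := e2.finite_iff.mpr this
  rw [Nat.card_congr (fixedEquivAux K), Nat.card_fun, Nat.card_congr e2]
  rfl

lemma finite_fixed {G A : Type*} [Group G] [Finite A] (K : Subgroup G) [K.FiniteIndex] :
    Finite {x : G → A // K ≤ MulAction.stabilizer G x} := by
  have e2 : Quotient (QuotientGroup.rightRel K) ≃ (G ⧸ K) :=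
    QuotientGroup.quotientRightRelEquivQuotientLeftRel K
  have : Finite (G ⧸ K) := K.finite_quotient_of_finiteIndex
  have : Finite (Quotient (QuotientGroup.rightRel K)) := e2.finite_iff.mpr this
  exact (fixedEquivAux K).finite_iff.mpr inferInstance

theorem stmt13 (G A : Type*) [Group G] [Group.FG G] [Finite A]
    (H : Subgroup G) (hH : H.FiniteIndex) (q : ℕ) (hq : Nat.card A = q)
    (k : ℕ) (hk : 1 ≤ k) (c : Fin (k + 1) → Subgroup G)
    (hmono : ∀ i j : Fin (k + 1), i < j → c i < c j)
    (h0 : c 0 = H) (hlast : c (Fin.last k) = ⊤)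
    (hint : ∀ K : Subgroup G, H ≤ K → ∃ i, K = c i) :
    (Nat.card {x : G → A // MulAction.stabilizer G x = H} : ℤ) =
      (q : ℤ) ^ H.index - (q : ℤ) ^ (c 1).index := by
  haveI := hH
  have h01 : (0 : Fin (k + 1)) < 1 := by
    rw [Fin.lt_iff_val_lt_val]
    simp [Fin.val_one', Nat.mod_eq_of_lt (by omega : 1 < k + 1)]
  have hHc1 : H < c 1 := h0 ▸ hmono 0 1 h01
  haveI : (c 1).FiniteIndex := Subgroup.finiteIndex_of_le hHc1.le
  -- the three sets
  set S : Set (G → A) := {x | H ≤ MulAction.stabilizer G x} with hS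
  set S1 : Set (G → A) := {x | c 1 ≤ MulAction.stabilizer G x} with hS1
  set E : Set (G → A) := {x | MulAction.stabilizer G x = H} with hE
  have hunion : S = E ∪ S1 := by
    ext x
    simp only [hS, hS1, hE, Set.mem_setOf_eq, Set.mem_union]
    constructor
    · intro hx
      obtain ⟨i, hi⟩ := hint _ hx
      rcases eq_or_ne i 0 with rfl | hne
      · left; rw [hi, h0]
      · right
        rw [hi]
        have h1i : (1 : Fin (k + 1)) ≤ i := by
          rw [Fin.le_iff_val_le_val]
          have hi1 : (1 : Fin (k + 1)).val = 1 := by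
            simp [Fin.val_one', Nat.mod_eq_of_lt (by omega : 1 < k + 1)]
          have : i.val ≠ 0 := fun h => hne (Fin.ext h)
          omega
        rcases h1i.lt_or_eq with h | h
        · exact (hmono 1 i h).le
        · rw [← h]
    · rintro (hx | hx)
      · exact hx.ge
      · exact hHc1.le.trans hx
  have hdisj : Disjoint E S1 := by
    rw [Set.disjoint_left]
    intro x hx hx1
    exact hHc1.not_ge (hx ▸ hx1)
  have hfinS : Finite ↥S := finite_fixed (A := A) H
  have hfinS1 : Finite ↥S1 := finite_fixed (A := A) (c 1)
  have hSfin : S.Finite := Set.toFinite S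
  have hS1fin : S1.Finite := Set.toFinite S1
  have hEfin : E.Finite := hSfin.subset (by rw [hunion]; exact Set.subset_union_left)
  have hcS : S.ncard = q ^ H.index := by
    rw [← Nat.card_coe_set_eq]
    have h := card_fixed (A := A) H
    rw [hq] at h
    exact h
  have hcS1 : S1.ncard = q ^ (c 1).index := by
    rw [← Nat.card_coe_set_eq]
    have h := card_fixed (A := A) (c 1)
    rw [hq] at h
    exact h
  have hkey : E.ncard + q ^ (c 1).index = q ^ H.index := by
    rw [← hcS, ← hcS1, hunion, Set.ncard_union_eq hdisj hEfin hS1fin]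
  have hcard : Nat.card {x : G → A // MulAction.stabilizer G x = H} = E.ncard :=
    Nat.card_coe_set_eq E
  rw [hcard]
  have := hkey
  zify at this
  linarith
end
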